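/- Let n, n_u, n_y be even positive integers with n_y = n_u, and let Ã ∈ ℝ^{n×n}, B̃_u ∈ ℝ^{n×n_u}, C̃ ∈ ℝ^{n_y×n} be real matrices. Suppose the algebraic Riccati equation X B̃_u Θ_{n_u} B̃_uᵀ X − Ãᵀ X − X Ã − C̃ᵀ Θ_{n_y} C̃ = 0 has a nonsingular, real, skew-symmetric solution X. Then there exists a real invertible matrix T ∈ ℝ^{n×n} such that, setting A = T Ã T⁻¹, B_u = T B̃_u, and C = C̃ T⁻¹ (so that C(sI − A)⁻¹B_u = C̃(sI − Ã)⁻¹B̃_u), one has Θ_n B_u Θ_{n_u} B_uᵀ Θ_n − Θ_n A − Aᵀ Θ_n − Cᵀ Θ_{n_y} C = 0; consequently the system (A, B_u, C) with B_{v1} = Θ_n Cᵀ Θ_{n_y} and no additional noise matrix B_{v2} is physically realizable. (Theorem 3.) -/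

import Mathlib

open Matrix

noncomputable section

/-- The canonical `k × k` block-diagonal skew-symmetric matrix
`Θ_k = diag(J, …, J)` with `J = [[0,1],[-1,0]]` (for `k` even). -/
def ThetaM (k : ℕ) : Matrix (Fin k) (Fin k) ℝ :=
  Matrix.of fun i j =>
    if j.val = i.val + 1 ∧ i.val % 2 = 0 then 1
    else if i.val = j.val + 1 ∧ j.val % 2 = 0 then -1
    else 0

/-- The complexification of a real matrix. -/
def toC {m n : ℕ} (M : Matrix (Fin m) (Fin n) ℝ) : Matrix (Fin m) (Fin n) ℂ :=
  M.map Complex.ofReal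

lemma thetaM_transpose (k : ℕ) : (ThetaM k)ᵀ = -ThetaM k := by
  ext i j
  simp only [ThetaM, transpose_apply, of_apply, Matrix.neg_apply]
  split_ifs <;> first | (exfalso; omega) | norm_num

lemma thetaM_sq {k : ℕ} (hk : Even k) : ThetaM k * ThetaM k = -1 := by
  have hk2 : k % 2 = 0 := Nat.even_iff.mp hk
  ext i j
  rw [Matrix.mul_apply]
  by_cases hi : i.val % 2 = 0
  · have h1 : i.val + 1 < k := by omega
    rw [Finset.sum_eq_single (⟨i.val + 1, h1⟩ : Fin k)]
    · simp only [ThetaM, of_apply, Matrix.neg_apply, Matrix.one_apply, Fin.ext_iff, true_and]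
      split_ifs <;> first | (exfalso; omega) | norm_num
    · intro k' _ hk'
      have hne : k'.val ≠ i.val + 1 := fun h => hk' (Fin.ext h)
      have hz : ThetaM _ i k' = 0 := by
        simp only [ThetaM, of_apply]; split_ifs <;> first | (exfalso; omega) | rfl
      rw [hz, zero_mul]
    · simp
  · have h1 : 1 ≤ i.val := by omega
    have h2 : i.val - 1 < k := by omega
    rw [Finset.sum_eq_single (⟨i.val - 1, h2⟩ : Fin k)]
    · simp only [ThetaM, of_apply, Matrix.neg_apply, Matrix.one_apply, Fin.ext_iff, true_and]
      split_ifs <;> first | (exfalso; omega) | norm_num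
    · intro k' _ hk'
      have hne : k'.val ≠ i.val - 1 := fun h => hk' (Fin.ext h)
      have hz : ThetaM _ i k' = 0 := by
        simp only [ThetaM, of_apply]; split_ifs <;> first | (exfalso; omega) | rfl
      rw [hz, zero_mul]
    · simp

lemma thetaM_isUnit {k : ℕ} (hk : Even k) : IsUnit (ThetaM k) := by
  have h : ThetaM k * (-(ThetaM k)) = 1 := by rw [Matrix.mul_neg, thetaM_sq hk, neg_neg]
  exact (Matrix.isUnit_iff_isUnit_det _).mpr (Matrix.isUnit_det_of_right_inverse h)


lemma skew_congr : ∀ n : ℕ, Even n → ∀ X : Matrix (Fin n) (Fin n) ℝ,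
    Xᵀ = -X → IsUnit X →
    ∃ S : Matrix (Fin n) (Fin n) ℝ, IsUnit S ∧ Sᵀ * X * S = ThetaM n := by
  intro n
  induction n using Nat.strong_induction_on with
  | _ n IH =>
  intro hne X hskew hX
  match n, hne, IH, X, hskew, hX with
  | 0, _, _, X, hskew, hX =>
    exact ⟨1, isUnit_one, by ext i j; exact i.elim0⟩
  | 1, hne, _, X, hskew, hX =>
    exfalso; simp at hne
  | (m+2), hne, IH, X, hskew, hX =>
    have hme : Even m := by rw [Nat.even_iff] at hne ⊢; omega
    have hXd : IsUnit X.det := (Matrix.isUnit_iff_isUnit_det X).mp hX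
    have hXmul : X * X⁻¹ = 1 := Matrix.mul_nonsing_inv X hXd
    have hXmul' : X⁻¹ * X = 1 := Matrix.nonsing_inv_mul X hXd
    -- the bilinear form
    set Φ : (Fin (m+2) → ℝ) → (Fin (m+2) → ℝ) → ℝ := fun u v => u ⬝ᵥ X *ᵥ v with hΦ
    have hΦskew : ∀ u v, Φ v u = -Φ u v := by
      intro u v
      calc v ⬝ᵥ X *ᵥ u = X.vecMul v ⬝ᵥ u := Matrix.dotProduct_mulVec v X u
        _ = (Xᵀ *ᵥ v) ⬝ᵥ u := by rw [Matrix.mulVec_transpose]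
        _ = ((-X) *ᵥ v) ⬝ᵥ u := by rw [hskew]
        _ = -((X *ᵥ v) ⬝ᵥ u) := by rw [Matrix.neg_mulVec, neg_dotProduct]
        _ = -(u ⬝ᵥ X *ᵥ v) := by rw [dotProduct_comm]
    have hΦalt : ∀ u, Φ u u = 0 := by
      intro u; have := hΦskew u u; linarith
    -- linearity helpers (second argument)
    have hΦr_add : ∀ u v w, Φ u (v + w) = Φ u v + Φ u w := by
      intro u v w; simp [hΦ, Matrix.mulVec_add, dotProduct_add]
    have hΦr_smul : ∀ (a : ℝ) u v, Φ u (a • v) = a * Φ u v := by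
      intro a u v; simp [hΦ, Matrix.mulVec_smul, dotProduct_smul, smul_eq_mul]
    have hΦr_sum : ∀ (u : Fin (m+2) → ℝ) (t : Finset (Fin m)) (g : Fin m → (Fin (m+2) → ℝ)),
        Φ u (∑ i ∈ t, g i) = ∑ i ∈ t, Φ u (g i) := by
      intro u t g
      induction t using Finset.induction with
      | empty => simp [hΦ]
      | insert _ _ hx ih =>
        rw [Finset.sum_insert hx, Finset.sum_insert hx, hΦr_add, ih]
    -- linearity helpers (first argument)
    have hΦr_sub : ∀ u v w, Φ u (v - w) = Φ u v - Φ u w := by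
      intro u v w; simp [hΦ, Matrix.mulVec_sub, dotProduct_sub]
    have hΦl_add : ∀ u v w, Φ (u + v) w = Φ u w + Φ v w := by
      intro u v w; simp [hΦ, add_dotProduct]
    have hΦl_sub : ∀ u v w, Φ (u - v) w = Φ u w - Φ v w := by
      intro u v w; simp [hΦ, sub_dotProduct]
    have hΦl_smul : ∀ (a : ℝ) u v, Φ (a • u) v = a * Φ u v := by
      intro a u v; simp [hΦ, smul_dotProduct, smul_eq_mul]
    have hΦl_sum : ∀ (t : Finset (Fin m)) (g : Fin m → (Fin (m+2) → ℝ)) v,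
        Φ (∑ i ∈ t, g i) v = ∑ i ∈ t, Φ (g i) v := by
      intro t g v
      induction t using Finset.induction with
      | empty => simp [hΦ]
      | insert _ _ hx ih =>
        rw [Finset.sum_insert hx, Finset.sum_insert hx, hΦl_add, ih]
    -- e and f
    set e : Fin (m+2) → ℝ := Pi.single 0 1 with he
    set f : Fin (m+2) → ℝ := X⁻¹ *ᵥ Pi.single 0 1 with hf
    have hXf : X *ᵥ f = Pi.single 0 1 := by
      rw [hf, Matrix.mulVec_mulVec, hXmul, Matrix.one_mulVec]
    have hef : Φ e f = 1 := by
      rw [hΦ]; simp only [hXf]; simp [he]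
    have hfe : Φ f e = -1 := by rw [hΦskew, hef]
    have hee : Φ e e = 0 := hΦalt e
    have hff : Φ f f = 0 := hΦalt f
    -- the linear map cutting out W
    set L : (Fin (m+2) → ℝ) →ₗ[ℝ] (Fin 2 → ℝ) :=
      (Matrix.of ![X.vecMul e, X.vecMul f]).mulVecLin with hLdef
    have hL0 : ∀ v, L v 0 = Φ e v := by
      intro v
      show (Matrix.of ![X.vecMul e, X.vecMul f]).mulVecLin v 0 = _
      simp only [Matrix.mulVecLin_apply, Matrix.mulVec, Matrix.of_apply, Matrix.cons_val_zero]
      exact (Matrix.dotProduct_mulVec e X v).symm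
    have hL1 : ∀ v, L v 1 = Φ f v := by
      intro v
      show (Matrix.of ![X.vecMul e, X.vecMul f]).mulVecLin v 1 = _
      simp only [Matrix.mulVecLin_apply, Matrix.mulVec, Matrix.of_apply, Matrix.cons_val_one,
        Matrix.head_cons]
      exact (Matrix.dotProduct_mulVec f X v).symm
    have hsurj : Function.Surjective L := by
      intro cv
      refine ⟨cv 0 • f - cv 1 • e, ?_⟩
      ext i
      fin_cases i
      · show L (cv 0 • f - cv 1 • e) 0 = cv 0
        rw [hL0, hΦr_sub, hΦr_smul, hΦr_smul, hef, hee]; ring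
      · show L (cv 0 • f - cv 1 • e) 1 = cv 1
        rw [hL1, hΦr_sub, hΦr_smul, hΦr_smul, hff, hfe]; ring
    set W := LinearMap.ker L with hW
    have hWrank : Module.finrank ℝ W = m := by
      have h := LinearMap.finrank_range_add_finrank_ker L
      rw [LinearMap.range_eq_top.mpr hsurj, finrank_top, Module.finrank_fin_fun,
        Module.finrank_fin_fun] at h
      rw [hW]
      omega
    set b : Module.Basis (Fin m) ℝ W := Module.finBasisOfFinrankEq ℝ W hWrank with hb
    have hbW : ∀ k : Fin m, (↑(b k) : Fin (m+2) → ℝ) ∈ W := fun k => (b k).2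
    have hΦeW : ∀ v ∈ W, Φ e v = 0 := by
      intro v hv
      have : L v = 0 := hv
      rw [← hL0 v, this]; rfl
    have hΦfW : ∀ v ∈ W, Φ f v = 0 := by
      intro v hv
      have : L v = 0 := hv
      rw [← hL1 v, this]; rfl
    -- the restricted Gram matrix
    set X' : Matrix (Fin m) (Fin m) ℝ := Matrix.of (fun i j => Φ (b i) (b j)) with hX'
    have hX'skew : X'ᵀ = -X' := by
      ext i j
      show Φ (b j) (b i) = -Φ (b i) (b j)
      exact hΦskew _ _
    -- any element of W with Φ (b k) w = 0 for all k is Φ-orthogonal to everything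
    have hX'ker : ∀ u : Fin m → ℝ, X' *ᵥ u = 0 → u = 0 := by
      intro u hu
      set w : W := ∑ k, u k • b k with hwdef
      have hwcoe : (↑w : Fin (m+2) → ℝ) = ∑ k, u k • (↑(b k) : Fin (m+2) → ℝ) := by
        simp [hwdef]
      have hbw : ∀ k, Φ (↑(b k)) ↑w = 0 := by
        intro k
        rw [hwcoe, hΦr_sum]
        have : ∀ l, Φ (↑(b k)) (u l • ↑(b l)) = X' k l * u l := by
          intro l; rw [hΦr_smul]; show u l * X' k l = X' k l * u l; ring
        rw [Finset.sum_congr rfl fun l _ => this l]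
        have h2 : (X' *ᵥ u) k = 0 := by rw [hu]; rfl
        rw [Matrix.mulVec, dotProduct] at h2
        exact h2
      have hWw : ∀ v ∈ W, Φ v ↑w = 0 := by
        intro v hv
        have hrepr := b.sum_repr ⟨v, hv⟩
        have hvcoe : v = ∑ k, (b.repr ⟨v, hv⟩) k • (↑(b k) : Fin (m+2) → ℝ) := by
          have h := congrArg Subtype.val hrepr
          rw [Submodule.coe_sum] at h
          simp only [Submodule.coe_smul] at h
          exact h.symm
        rw [hvcoe, hΦl_sum]
        refine Finset.sum_eq_zero fun k _ => ?_
        rw [hΦl_smul, hbw k, mul_zero]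
      have hallw : ∀ v, Φ v ↑w = 0 := by
        intro v
        have hdec : v = (v + Φ f v • e - Φ e v • f) + ((- Φ f v) • e + Φ e v • f) := by
          module
        have hmem : (v + Φ f v • e - Φ e v • f) ∈ W := by
          have h0 : L (v + Φ f v • e - Φ e v • f) = 0 := by
            ext i
            fin_cases i
            · show L (v + Φ f v • e - Φ e v • f) 0 = 0
              rw [hL0, hΦr_sub, hΦr_add, hΦr_smul, hΦr_smul, hef, hee]; ring
            · show L (v + Φ f v • e - Φ e v • f) 1 = 0
              rw [hL1, hΦr_sub, hΦr_add, hΦr_smul, hΦr_smul, hff, hfe]; ring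
          exact h0
        rw [hdec, hΦl_add, hΦl_add, hΦl_smul, hΦl_smul, hWw _ hmem,
          hΦeW _ w.2, hΦfW _ w.2]
        ring
      have hXw : X *ᵥ (↑w : Fin (m+2) → ℝ) = 0 := by
        ext i
        have := hallw (Pi.single i 1)
        rw [hΦ] at this
        simpa using this
      have hw0 : (↑w : Fin (m+2) → ℝ) = 0 := by
        have := congrArg (fun y => X⁻¹ *ᵥ y) hXw
        simpa [Matrix.mulVec_mulVec, hXmul'] using this
      have hwz : w = 0 := Subtype.ext hw0
      have hlin := b.linearIndependent
      rw [Fintype.linearIndependent_iff] at hlin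
      ext k
      exact hlin u (by rw [← hwdef, hwz]) k
    have hX'unit : IsUnit X' := by
      rw [← Matrix.mulVec_injective_iff_isUnit]
      intro u1 u2 h12
      have h0 : X' *ᵥ (u1 - u2) = 0 := by
        rw [Matrix.mulVec_sub, h12, sub_self]
      have := hX'ker _ h0
      exact sub_eq_zero.mp this
    -- apply the induction hypothesis
    obtain ⟨S', hS'unit, hS'⟩ := IH m (by omega) hme X' hX'skew hX'unit
    -- the new basis vectors
    set c : Fin m → (Fin (m+2) → ℝ) := fun j => ∑ k, S' k j • (↑(b k) : Fin (m+2) → ℝ)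
      with hc
    have hcW : ∀ j, c j ∈ W := by
      intro j
      exact Submodule.sum_mem _ fun k _ => Submodule.smul_mem _ _ (hbW k)
    have hΦcc : ∀ i j, Φ (c i) (c j) = ThetaM m i j := by
      intro i j
      rw [hc]
      simp only
      rw [hΦl_sum]
      have h1 : ∀ k, Φ (S' k i • ↑(b k)) (∑ l, S' l j • (↑(b l) : Fin (m+2) → ℝ))
          = ∑ l, S' k i * (S' l j * X' k l) := by
        intro k
        rw [hΦl_smul, hΦr_sum]
        rw [Finset.mul_sum]
        congr 1; ext l
        rw [hΦr_smul]
        rfl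
      rw [Finset.sum_congr rfl fun k _ => h1 k]
      have : (S'ᵀ * X' * S') i j = ∑ k, ∑ l, S' k i * (S' l j * X' k l) := by
        rw [Matrix.mul_apply]
        simp only [Matrix.mul_apply, Matrix.transpose_apply, Finset.sum_mul]
        rw [Finset.sum_comm]
        congr 1; ext k
        congr 1; ext l
        ring
      rw [← this, hS']
    have hΦec : ∀ j, Φ e (c j) = 0 := fun j => hΦeW _ (hcW j)
    have hΦfc : ∀ j, Φ f (c j) = 0 := fun j => hΦfW _ (hcW j)
    have hΦce : ∀ j, Φ (c j) e = 0 := by intro j; rw [hΦskew, hΦec, neg_zero]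
    have hΦcf : ∀ j, Φ (c j) f = 0 := by intro j; rw [hΦskew, hΦfc, neg_zero]
    -- assemble the congruence matrix
    set cols : Fin (m+2) → (Fin (m+2) → ℝ) := fun j =>
      if h0 : (j : ℕ) = 0 then e
      else if h1 : (j : ℕ) = 1 then f
      else c ⟨(j : ℕ) - 2, by omega⟩ with hcols
    set S : Matrix (Fin (m+2)) (Fin (m+2)) ℝ := Matrix.of (fun i j => cols j i) with hS
    have hentry : ∀ i j, (Sᵀ * X * S) i j = Φ (cols i) (cols j) := by
      intro i j
      rw [Matrix.mul_apply]
      have : ∀ l, (Sᵀ * X) i l * S l j = (∑ k, cols i k * X k l) * cols j l := by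
        intro l
        rw [Matrix.mul_apply]
        rfl
      rw [Finset.sum_congr rfl fun l _ => this l]
      rw [hΦ]
      simp only [dotProduct, Matrix.mulVec, Finset.sum_mul, Finset.mul_sum]
      rw [Finset.sum_comm]
      congr 1; ext l
      congr 1; ext k
      ring
    have hcols0 : ∀ j : Fin (m+2), (j : ℕ) = 0 → cols j = e := by
      intro j hj; simp only [hcols]; rw [dif_pos hj]
    have hcols1 : ∀ j : Fin (m+2), (j : ℕ) = 1 → cols j = f := by
      intro j hj; simp only [hcols]; rw [dif_neg (by omega), dif_pos hj]
    have hcols2 : ∀ (j : Fin (m+2)) (hj : 2 ≤ (j : ℕ)),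
        cols j = c ⟨(j : ℕ) - 2, by omega⟩ := by
      intro j hj; simp only [hcols]; rw [dif_neg (by omega), dif_neg (by omega)]
    have hgram : Sᵀ * X * S = ThetaM (m+2) := by
      ext i j
      rw [hentry i j]
      by_cases hi0 : (i : ℕ) = 0
      · by_cases hj0 : (j : ℕ) = 0
        · rw [hcols0 i hi0, hcols0 j hj0, hee]
          symm; simp only [ThetaM, Matrix.of_apply]
          split_ifs <;> first | (exfalso; omega) | rfl
        · by_cases hj1 : (j : ℕ) = 1
          · rw [hcols0 i hi0, hcols1 j hj1, hef]
            symm; simp only [ThetaM, Matrix.of_apply]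
            split_ifs <;> first | (exfalso; omega) | norm_num
          · rw [hcols0 i hi0, hcols2 j (by omega), hΦec]
            symm; simp only [ThetaM, Matrix.of_apply]
            split_ifs <;> first | (exfalso; omega) | rfl
      · by_cases hi1 : (i : ℕ) = 1
        · by_cases hj0 : (j : ℕ) = 0
          · rw [hcols1 i hi1, hcols0 j hj0, hfe]
            symm; simp only [ThetaM, Matrix.of_apply]
            split_ifs <;> first | (exfalso; omega) | norm_num
          · by_cases hj1 : (j : ℕ) = 1
            · rw [hcols1 i hi1, hcols1 j hj1, hff]
              symm; simp only [ThetaM, Matrix.of_apply]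
              split_ifs <;> first | (exfalso; omega) | rfl
            · rw [hcols1 i hi1, hcols2 j (by omega), hΦfc]
              symm; simp only [ThetaM, Matrix.of_apply]
              split_ifs <;> first | (exfalso; omega) | rfl
        · by_cases hj0 : (j : ℕ) = 0
          · rw [hcols2 i (by omega), hcols0 j hj0, hΦce]
            symm; simp only [ThetaM, Matrix.of_apply]
            split_ifs <;> first | (exfalso; omega) | rfl
          · by_cases hj1 : (j : ℕ) = 1
            · rw [hcols2 i (by omega), hcols1 j hj1, hΦcf]
              symm; simp only [ThetaM, Matrix.of_apply]
              split_ifs <;> first | (exfalso; omega) | rfl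
            · rw [hcols2 i (by omega), hcols2 j (by omega), hΦcc]
              simp only [ThetaM, Matrix.of_apply]
              split_ifs <;> first | (exfalso; omega) | rfl
    have hSunit : IsUnit S := by
      have hθd : IsUnit (ThetaM (m+2)).det :=
        (Matrix.isUnit_iff_isUnit_det _).mp (thetaM_isUnit hne)
      rw [← hgram, Matrix.det_mul, Matrix.det_mul, Matrix.det_transpose] at hθd
      exact (Matrix.isUnit_iff_isUnit_det S).mpr (IsUnit.mul_iff.mp (IsUnit.mul_iff.mp hθd).1).1
    exact ⟨S, hSunit, hgram⟩

lemma toC_mul {a b c : ℕ} (M : Matrix (Fin a) (Fin b) ℝ) (N : Matrix (Fin b) (Fin c) ℝ) :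
    toC (M * N) = toC M * toC N := by
  ext i j
  simp [toC, Matrix.mul_apply]

lemma toC_one {a : ℕ} : toC (1 : Matrix (Fin a) (Fin a) ℝ) = 1 := by
  ext i j
  simp [toC, Matrix.one_apply, apply_ite]


lemma part3 {n nu : ℕ} (hne : Even n) (hnue : Even nu)
    (A : Matrix (Fin n) (Fin n) ℝ) (Bu : Matrix (Fin n) (Fin nu) ℝ)
    (C : Matrix (Fin nu) (Fin n) ℝ)
    (hE : ThetaM n * Bu * ThetaM nu * Buᵀ * ThetaM n - ThetaM n * A - Aᵀ * ThetaM n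
          - Cᵀ * ThetaM nu * C = 0) :
    A * ThetaM n + ThetaM n * Aᵀ + Bu * ThetaM nu * Buᵀ
      + (ThetaM n * Cᵀ * ThetaM nu) * ThetaM nu * (ThetaM n * Cᵀ * ThetaM nu)ᵀ = 0 := by
  have hΘn := thetaM_sq hne
  have hΘu := thetaM_sq hnue
  have key : ThetaM n * (ThetaM n * Bu * ThetaM nu * Buᵀ * ThetaM n - ThetaM n * A
      - Aᵀ * ThetaM n - Cᵀ * ThetaM nu * C) * ThetaM n = 0 := by
    rw [hE, Matrix.mul_zero, Matrix.zero_mul]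
  have e1 : ThetaM n * (ThetaM n * Bu * ThetaM nu * Buᵀ * ThetaM n) * ThetaM n
      = Bu * ThetaM nu * Buᵀ := by
    calc ThetaM n * (ThetaM n * Bu * ThetaM nu * Buᵀ * ThetaM n) * ThetaM n
        = (ThetaM n * ThetaM n) * (Bu * ThetaM nu * Buᵀ) * (ThetaM n * ThetaM n) := by
          simp only [Matrix.mul_assoc]
      _ = (-1) * (Bu * ThetaM nu * Buᵀ) * (-1) := by rw [hΘn]
      _ = Bu * ThetaM nu * Buᵀ := by noncomm_ring
  have e2 : ThetaM n * (ThetaM n * A) * ThetaM n = -(A * ThetaM n) := by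
    calc ThetaM n * (ThetaM n * A) * ThetaM n
        = (ThetaM n * ThetaM n) * (A * ThetaM n) := by simp only [Matrix.mul_assoc]
      _ = (-1) * (A * ThetaM n) := by rw [hΘn]
      _ = -(A * ThetaM n) := by noncomm_ring
  have e3 : ThetaM n * (Aᵀ * ThetaM n) * ThetaM n = -(ThetaM n * Aᵀ) := by
    calc ThetaM n * (Aᵀ * ThetaM n) * ThetaM n
        = (ThetaM n * Aᵀ) * (ThetaM n * ThetaM n) := by simp only [Matrix.mul_assoc]
      _ = (ThetaM n * Aᵀ) * (-1) := by rw [hΘn]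
      _ = -(ThetaM n * Aᵀ) := by noncomm_ring
  have ht : (ThetaM n * Cᵀ * ThetaM nu)ᵀ = ThetaM nu * C * ThetaM n := by
    rw [Matrix.transpose_mul, Matrix.transpose_mul, Matrix.transpose_transpose,
      thetaM_transpose n, thetaM_transpose nu]
    simp only [Matrix.neg_mul, Matrix.mul_neg, neg_neg, Matrix.mul_assoc]
  have h1 : (ThetaM n * Cᵀ * ThetaM nu) * ThetaM nu = -(ThetaM n * Cᵀ) := by
    rw [Matrix.mul_assoc, hΘu, Matrix.mul_neg, Matrix.mul_one]
  have e4 : ThetaM n * (Cᵀ * ThetaM nu * C) * ThetaM n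
      = -((ThetaM n * Cᵀ * ThetaM nu) * ThetaM nu * (ThetaM n * Cᵀ * ThetaM nu)ᵀ) := by
    rw [ht, h1, Matrix.neg_mul, neg_neg]
    simp only [Matrix.mul_assoc]
  simp only [Matrix.mul_sub, Matrix.sub_mul] at key
  rw [e1, e2, e3, e4] at key
  rw [← key]
  abel


/-- **Theorem 3.** If the algebraic Riccati equation
`X B̃u Θ B̃uᵀ X − Ãᵀ X − X Ã − C̃ᵀ Θ C̃ = 0` has a nonsingular real skew-symmetric
solution `X`, then there is a real invertible `T` such that the state transformation
`A = TÃT⁻¹`, `Bu = TB̃u`, `C = C̃T⁻¹` preserves the transfer function and yields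
`Θ Bu Θ Buᵀ Θ − Θ A − Aᵀ Θ − Cᵀ Θ C = 0`; consequently the transformed system with
`B_{v1} = Θ Cᵀ Θ` and no additional noise matrix is physically realizable. -/
theorem riccati_skew_solution_implies_physically_realizable
    (n nu : ℕ) (hn : 0 < n) (hne : Even n) (hnu : 0 < nu) (hnue : Even nu)
    (At : Matrix (Fin n) (Fin n) ℝ) (But : Matrix (Fin n) (Fin nu) ℝ)
    (Ct : Matrix (Fin nu) (Fin n) ℝ)
    (X : Matrix (Fin n) (Fin n) ℝ) (hXinv : IsUnit X) (hXskew : Xᵀ = -X)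
    (hRic : X * But * ThetaM nu * Butᵀ * X - Atᵀ * X - X * At
            - Ctᵀ * ThetaM nu * Ct = 0) :
    ∃ T : Matrix (Fin n) (Fin n) ℝ, IsUnit T ∧
      (∀ s : ℂ,
        toC (Ct * T⁻¹) * (s • (1 : Matrix (Fin n) (Fin n) ℂ) - toC (T * At * T⁻¹))⁻¹ *
            toC (T * But)
          = toC Ct * (s • (1 : Matrix (Fin n) (Fin n) ℂ) - toC At)⁻¹ * toC But) ∧
      ThetaM n * (T * But) * ThetaM nu * (T * But)ᵀ * ThetaM n
        - ThetaM n * (T * At * T⁻¹) - (T * At * T⁻¹)ᵀ * ThetaM n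
        - (Ct * T⁻¹)ᵀ * ThetaM nu * (Ct * T⁻¹) = 0 ∧
      (T * At * T⁻¹) * ThetaM n + ThetaM n * (T * At * T⁻¹)ᵀ
        + (T * But) * ThetaM nu * (T * But)ᵀ
        + (ThetaM n * (Ct * T⁻¹)ᵀ * ThetaM nu) * ThetaM nu *
            (ThetaM n * (Ct * T⁻¹)ᵀ * ThetaM nu)ᵀ = 0 := by
  obtain ⟨S, hSu, hgram⟩ := skew_congr n hne X hXskew hXinv
  have hSd : IsUnit S.det := (Matrix.isUnit_iff_isUnit_det S).mp hSu
  have hS1 : S * S⁻¹ = 1 := Matrix.mul_nonsing_inv S hSd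
  have hS2 : S⁻¹ * S = 1 := Matrix.nonsing_inv_mul S hSd
  have hTT : (S⁻¹)⁻¹ = S := Matrix.nonsing_inv_nonsing_inv S hSd
  have hSIu : IsUnit S⁻¹ := by
    have h : S⁻¹.det * S.det = 1 := by rw [← Matrix.det_mul, hS2, Matrix.det_one]
    exact (Matrix.isUnit_iff_isUnit_det _).mpr (IsUnit.of_mul_eq_one _ h)
  -- cancellation lemmas
  have hS1t : Sᵀ * (S⁻¹)ᵀ = 1 := by rw [← Matrix.transpose_mul, hS2, Matrix.transpose_one]
  have hS2t : (S⁻¹)ᵀ * Sᵀ = 1 := by rw [← Matrix.transpose_mul, hS1, Matrix.transpose_one]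
  have cS1 : ∀ {p : ℕ} (M : Matrix (Fin n) (Fin p) ℝ), S * (S⁻¹ * M) = M := by
    intro p M; rw [← Matrix.mul_assoc, hS1, Matrix.one_mul]
  have cS2 : ∀ {p : ℕ} (M : Matrix (Fin n) (Fin p) ℝ), S⁻¹ * (S * M) = M := by
    intro p M; rw [← Matrix.mul_assoc, hS2, Matrix.one_mul]
  have cS3 : ∀ {p : ℕ} (M : Matrix (Fin n) (Fin p) ℝ), Sᵀ * ((S⁻¹)ᵀ * M) = M := by
    intro p M; rw [← Matrix.mul_assoc, hS1t, Matrix.one_mul]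
  have cS4 : ∀ {p : ℕ} (M : Matrix (Fin n) (Fin p) ℝ), (S⁻¹)ᵀ * (Sᵀ * M) = M := by
    intro p M; rw [← Matrix.mul_assoc, hS2t, Matrix.one_mul]
  -- goal 2 with S in place of T⁻¹
  have hRic2 : X * But * ThetaM nu * Butᵀ * X - X * At - Atᵀ * X
      - Ctᵀ * ThetaM nu * Ct = 0 := by rw [← hRic]; abel
  have hgoal2 : ThetaM n * (S⁻¹ * But) * ThetaM nu * (S⁻¹ * But)ᵀ * ThetaM n
      - ThetaM n * (S⁻¹ * At * S) - (S⁻¹ * At * S)ᵀ * ThetaM n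
      - (Ct * S)ᵀ * ThetaM nu * (Ct * S) = 0 := by
    have heq : ThetaM n * (S⁻¹ * But) * ThetaM nu * (S⁻¹ * But)ᵀ * ThetaM n
        - ThetaM n * (S⁻¹ * At * S) - (S⁻¹ * At * S)ᵀ * ThetaM n
        - (Ct * S)ᵀ * ThetaM nu * (Ct * S)
        = Sᵀ * (X * But * ThetaM nu * Butᵀ * X - X * At - Atᵀ * X
            - Ctᵀ * ThetaM nu * Ct) * S := by
      rw [← hgram]
      simp only [Matrix.transpose_mul, Matrix.mul_sub, Matrix.sub_mul, Matrix.mul_assoc,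
        cS1, cS2, cS3, cS4]
    rw [heq, hRic2, Matrix.mul_zero, Matrix.zero_mul]
  refine ⟨S⁻¹, hSIu, ?_, ?_, ?_⟩
  · -- transfer function
    intro s
    rw [hTT]
    have hPQ : toC S * toC S⁻¹ = 1 := by rw [← toC_mul, hS1, toC_one]
    have hQP : toC S⁻¹ * toC S = 1 := by rw [← toC_mul, hS2, toC_one]
    have hkey : s • (1 : Matrix (Fin n) (Fin n) ℂ) - toC (S⁻¹ * At * S)
        = toC S⁻¹ * (s • (1 : Matrix (Fin n) (Fin n) ℂ) - toC At) * toC S := by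
      rw [toC_mul, toC_mul, Matrix.mul_sub, Matrix.sub_mul, Matrix.mul_smul,
        Matrix.mul_one, Matrix.smul_mul, hQP]
    rw [hkey]
    have h1 : (toC S)⁻¹ = toC S⁻¹ := Matrix.inv_eq_right_inv hPQ
    have h2 : (toC S⁻¹)⁻¹ = toC S := Matrix.inv_eq_right_inv hQP
    have hinv : (toC S⁻¹ * (s • (1 : Matrix (Fin n) (Fin n) ℂ) - toC At) * toC S)⁻¹
        = toC S⁻¹ * (s • (1 : Matrix (Fin n) (Fin n) ℂ) - toC At)⁻¹ * toC S := by
      rw [Matrix.mul_inv_rev, Matrix.mul_inv_rev, h1, h2]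
      simp only [Matrix.mul_assoc]
    rw [hinv, toC_mul, toC_mul]
    have cC1 : ∀ {p : ℕ} (M : Matrix (Fin n) (Fin p) ℂ), toC S * (toC S⁻¹ * M) = M := by
      intro p M; rw [← Matrix.mul_assoc, hPQ, Matrix.one_mul]
    simp only [Matrix.mul_assoc, cC1]
  · rw [hTT]; exact hgoal2
  · rw [hTT]; exact part3 hne hnue (S⁻¹ * At * S) (S⁻¹ * But) (Ct * S) hgoal2
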